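/- Let G be a finite graph not containing K_t as an odd minor. Then there exists a partition X₁,…,Xₙ of V(G) such that each G[Xᵢ] is bipartite, and the quotient graph H on {1,…,n} (with i ∼ j iff there is an edge of G between Xᵢ and Xⱼ) does not contain K_t as a minor. -/

import Mathlib

/-- `G` contains `K t` as a minor: there are `t` pairwise vertex-disjoint subtrees of `G`
with at least one edge of `G` between any two of them. -/
def HasKMinor {V : Type*} (G : SimpleGraph V) (t : ℕ) : Prop :=
  ∃ T : Fin t → G.Subgraph,
    (∀ i, (T i).coe.IsTree) ∧
    (Pairwise fun i j => Disjoint (T i).verts (T j).verts) ∧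
    (∀ i j : Fin t, i ≠ j → ∃ u ∈ (T i).verts, ∃ v ∈ (T j).verts, G.Adj u v)

/-- `G` contains `K t` as an odd minor: there are `t` pairwise vertex-disjoint subtrees of `G`,
one connecting edge `e i j` of `G` between any two of them, and a `2`-coloring `c` of the
vertices making every tree edge bichromatic and every connecting edge monochromatic. -/
def HasOddKMinor {V : Type*} (G : SimpleGraph V) (t : ℕ) : Prop :=
  ∃ (T : Fin t → G.Subgraph) (e : Fin t → Fin t → V × V) (c : V → Bool),
    (∀ i, (T i).coe.IsTree) ∧
    (Pairwise fun i j => Disjoint (T i).verts (T j).verts) ∧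
    (∀ i j : Fin t, i ≠ j →
      (e i j).1 ∈ (T i).verts ∧ (e i j).2 ∈ (T j).verts ∧ G.Adj (e i j).1 (e i j).2) ∧
    (∀ i, ∀ u v : V, (T i).Adj u v → c u ≠ c v) ∧
    (∀ i j : Fin t, i ≠ j → c (e i j).1 = c (e i j).2)


namespace Stmt4Aux

open SimpleGraph

variable {V : Type*}

lemma reach_mono {A B : SimpleGraph V} (h : ∀ a b, A.Adj a b → B.Reachable a b) :
    ∀ {u v : V}, A.Reachable u v → B.Reachable u v := by
  intro u v hr
  obtain ⟨w⟩ := hr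
  induction w with
  | nil => exact Reachable.refl _
  | cons h' _ ih => exact (h _ _ h').trans ih

lemma rtg_reach {B : SimpleGraph V} {r : V → V → Prop} (h : ∀ a b, r a b → B.Adj a b)
    {u v : V} (hr : Relation.ReflTransGen r u v) : B.Reachable u v := by
  induction hr with
  | refl => exact Reachable.refl _
  | tail _ hbc ih => exact ih.trans (h _ _ hbc).reachable

lemma reach_induce {B : SimpleGraph V} {W : Set V} (hB : ∀ a b, B.Adj a b → a ∈ W ∧ b ∈ W) :
    ∀ {u v : V} (_ : B.Walk u v) (hu : u ∈ W) (hv : v ∈ W),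
      (B.induce W).Reachable ⟨u, hu⟩ ⟨v, hv⟩ := by
  intro u v w
  induction w with
  | nil => intro hu hv; exact Reachable.refl _
  | @cons a b c h p ih =>
    intro hu hv
    have hb : b ∈ W := (hB _ _ h).2
    have step : (B.induce W).Adj ⟨a, hu⟩ ⟨b, hb⟩ := h
    exact step.reachable.trans (ih hb hv)

lemma exists_spanning_tree {α : Type*} [Finite α] (Γ : SimpleGraph α) (h : Γ.Connected) :
    ∃ T : SimpleGraph α, T ≤ Γ ∧ T.IsTree := by
  classical
  suffices H : ∀ (m : ℕ) (Γ : SimpleGraph α), Γ.edgeSet.ncard ≤ m → Γ.Connected →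
      ∃ T, T ≤ Γ ∧ T.IsTree from H _ Γ le_rfl h
  intro m
  induction m with
  | zero =>
    intro Γ hc hconn
    have hempty : Γ.edgeSet = ∅ := by
      rw [Nat.le_zero] at hc
      exact (Set.ncard_eq_zero (Set.toFinite _)).mp hc
    have hbot : Γ = ⊥ := edgeSet_eq_empty.mp hempty
    exact ⟨Γ, le_rfl, ⟨hconn, hbot ▸ isAcyclic_bot⟩⟩
  | succ m ih =>
    intro Γ hc hconn
    by_cases hac : Γ.IsAcyclic
    · exact ⟨Γ, le_rfl, ⟨hconn, hac⟩⟩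
    · rw [isAcyclic_iff_forall_edge_isBridge] at hac
      push_neg at hac
      obtain ⟨e, he, hbr⟩ := hac
      revert he hbr
      induction e using Sym2.ind with
      | _ v w =>
        intro he hbr
        have hvw : Γ.Adj v w := (mem_edgeSet Γ).mp he
        have hre : (Γ \ fromEdgeSet {s(v, w)}).Reachable v w := by
          by_contra hnr
          exact hbr (isBridge_iff.mpr hnr)
        have hle : (Γ \ fromEdgeSet {s(v, w)}) ≤ Γ := sdiff_le
        have hst : ∀ a b, Γ.Adj a b → (Γ \ fromEdgeSet {s(v, w)}).Reachable a b := by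
          intro a b hab
          by_cases hsame : s(a, b) = s(v, w)
          · rw [Sym2.eq_iff] at hsame
            rcases hsame with ⟨rfl, rfl⟩ | ⟨rfl, rfl⟩
            · exact hre
            · exact hre.symm
          · refine Adj.reachable ?_
            rw [sdiff_adj]
            exact ⟨hab, by simp [fromEdgeSet_adj, hsame]⟩
        have hconn' : (Γ \ fromEdgeSet {s(v, w)}).Connected := by
          haveI := hconn.nonempty
          exact ⟨fun a b => reach_mono hst (hconn.preconnected a b)⟩
        have hcard : (Γ \ fromEdgeSet {s(v, w)}).edgeSet.ncard ≤ m := by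
          have hes : (Γ \ fromEdgeSet {s(v, w)}).edgeSet = Γ.edgeSet \ {s(v, w)} := by
            simp [edgeSet_sdiff, edgeSet_fromEdgeSet, edgeSet_sdiff_sdiff_isDiag]
          rw [hes, Set.ncard_diff_singleton_of_mem he]
          have hpos : 1 ≤ Γ.edgeSet.ncard := by
            rw [Nat.one_le_iff_ne_zero]
            intro h0
            rw [(Set.ncard_eq_zero (Set.toFinite _)).mp h0] at he
            exact he
          omega
        obtain ⟨T, hT, htree⟩ := ih _ hcard hconn'
        exact ⟨T, hT.trans hle, htree⟩

/-- step relation within a set -/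
def Rel (G : SimpleGraph V) (X : Set V) (a b : V) : Prop := a ∈ X ∧ b ∈ X ∧ G.Adj a b

def GoodPart (G : SimpleGraph V) (X : Set V) : Prop :=
  X.Nonempty ∧ (∀ u ∈ X, ∀ v ∈ X, Relation.ReflTransGen (Rel G X) u v) ∧
    ∃ f : V → Bool, ∀ u v, u ∈ X → v ∈ X → G.Adj u v → f u ≠ f v

def GoodP (G : SimpleGraph V) (P : Finset (Set V)) : Prop :=
  (∀ X ∈ P, GoodPart G X) ∧ ∀ v : V, ∃! X, X ∈ P ∧ v ∈ X

lemma goodP_singletons [Fintype V] (G : SimpleGraph V) :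
    ∃ P : Finset (Set V), GoodP G P := by
  classical
  refine ⟨Finset.univ.image (fun v => ({v} : Set V)), ?_, ?_⟩
  · intro X hX
    obtain ⟨v, -, rfl⟩ := Finset.mem_image.mp hX
    refine ⟨⟨v, rfl⟩, ?_, fun _ => true, ?_⟩
    · intro u hu w hw
      rw [Set.mem_singleton_iff] at hu hw
      subst hu; subst hw; exact Relation.ReflTransGen.refl
    · intro u w hu hw ha
      rw [Set.mem_singleton_iff] at hu hw
      subst hu; subst hw; exact absurd ha G.irrefl
  · intro v
    refine ⟨{v}, ⟨Finset.mem_image.mpr ⟨v, Finset.mem_univ v, rfl⟩, rfl⟩, ?_⟩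
    rintro Y ⟨hY, hvY⟩
    obtain ⟨u, -, rfl⟩ := Finset.mem_image.mp hY
    rw [Set.mem_singleton_iff] at hvY
    subst hvY; rfl

lemma GoodP.parts_disjoint {G : SimpleGraph V} {P : Finset (Set V)} (hP : GoodP G P)
    {X Y : Set V} (hX : X ∈ P) (hY : Y ∈ P) (hne : X ≠ Y) {v : V}
    (hvX : v ∈ X) (hvY : v ∈ Y) : False := by
  obtain ⟨Z, -, hZu⟩ := hP.2 v
  exact hne ((hZu X ⟨hX, hvX⟩).trans (hZu Y ⟨hY, hvY⟩).symm)

lemma GoodP.merge {G : SimpleGraph V} {P : Finset (Set V)} (hP : GoodP G P)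
    {X Y : Set V} (hX : X ∈ P) (hY : Y ∈ P) (hne : X ≠ Y)
    (hconn : ∃ u ∈ X, ∃ v ∈ Y, G.Adj u v)
    (f : V → Bool)
    (hfX : ∀ u v, u ∈ X → v ∈ X → G.Adj u v → f u ≠ f v)
    (hfY : ∀ u v, u ∈ Y → v ∈ Y → G.Adj u v → f u ≠ f v)
    (hfc : ∀ u v, u ∈ X → v ∈ Y → G.Adj u v → f u ≠ f v) :
    ∃ Q : Finset (Set V), GoodP G Q ∧ Q.card < P.card := by
  classical
  obtain ⟨u0, hu0, v0, hv0, hadj⟩ := hconn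
  have hXc := (hP.1 X hX).2.1
  have hYc := (hP.1 Y hY).2.1
  have monoX : ∀ {a b}, Relation.ReflTransGen (Rel G X) a b →
      Relation.ReflTransGen (Rel G (X ∪ Y)) a b :=
    fun h => Relation.ReflTransGen.mono (r := Rel G X) (p := Rel G (X ∪ Y)) (fun a b ⟨h1, h2, h3⟩ => ⟨Or.inl h1, Or.inl h2, h3⟩) _ _ h
  have monoY : ∀ {a b}, Relation.ReflTransGen (Rel G Y) a b →
      Relation.ReflTransGen (Rel G (X ∪ Y)) a b :=
    fun h => Relation.ReflTransGen.mono (r := Rel G Y) (p := Rel G (X ∪ Y)) (fun a b ⟨h1, h2, h3⟩ => ⟨Or.inr h1, Or.inr h2, h3⟩) _ _ h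
  have bridge : Relation.ReflTransGen (Rel G (X ∪ Y)) u0 v0 :=
    Relation.ReflTransGen.single ⟨Or.inl hu0, Or.inr hv0, hadj⟩
  have bridge' : Relation.ReflTransGen (Rel G (X ∪ Y)) v0 u0 :=
    Relation.ReflTransGen.single ⟨Or.inr hv0, Or.inl hu0, hadj.symm⟩
  have hgood : GoodPart G (X ∪ Y) := by
    refine ⟨⟨u0, Or.inl hu0⟩, ?_, f, ?_⟩
    · intro a ha b hb
      rcases ha with haX | haY <;> rcases hb with hbX | hbY
      · exact monoX (hXc a haX b hbX)
      · exact ((monoX (hXc a haX u0 hu0)).trans bridge).trans (monoY (hYc v0 hv0 b hbY))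
      · exact ((monoY (hYc a haY v0 hv0)).trans bridge').trans (monoX (hXc u0 hu0 b hbX))
      · exact monoY (hYc a haY b hbY)
    · intro u v hu hv ha
      rcases hu with huX | huY <;> rcases hv with hvX | hvY
      · exact hfX u v huX hvX ha
      · exact hfc u v huX hvY ha
      · exact (hfc v u hvX huY ha.symm).symm
      · exact hfY u v huY hvY ha
  refine ⟨insert (X ∪ Y) ((P.erase X).erase Y), ⟨?_, ?_⟩, ?_⟩
  · intro Z hZ
    rcases Finset.mem_insert.mp hZ with rfl | hZ'
    · exact hgood
    · exact hP.1 Z (Finset.mem_of_mem_erase (Finset.mem_of_mem_erase hZ'))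
  · intro v
    obtain ⟨Z0, ⟨hZ0P, hvZ0⟩, hZ0u⟩ := hP.2 v
    by_cases hcase : Z0 = X ∨ Z0 = Y
    · refine ⟨X ∪ Y, ⟨Finset.mem_insert_self _ _, ?_⟩, ?_⟩
      · rcases hcase with rfl | rfl
        · exact Or.inl hvZ0
        · exact Or.inr hvZ0
      · rintro W ⟨hW, hvW⟩
        rcases Finset.mem_insert.mp hW with rfl | hW'
        · rfl
        · exfalso
          have hWP : W ∈ P := Finset.mem_of_mem_erase (Finset.mem_of_mem_erase hW')
          have hWX : W ≠ Y := (Finset.mem_erase.mp hW').1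
          have hWY : W ≠ X := (Finset.mem_erase.mp (Finset.mem_of_mem_erase hW')).1
          have := hZ0u W ⟨hWP, hvW⟩
          rcases hcase with rfl | rfl
          · exact hWY this
          · exact hWX this
    · push_neg at hcase
      refine ⟨Z0, ⟨?_, hvZ0⟩, ?_⟩
      · exact Finset.mem_insert.mpr (Or.inr (Finset.mem_erase.mpr ⟨hcase.2,
          Finset.mem_erase.mpr ⟨hcase.1, hZ0P⟩⟩))
      · rintro W ⟨hW, hvW⟩
        rcases Finset.mem_insert.mp hW with rfl | hW'
        · exfalso
          rcases hvW with hvX | hvY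
          · exact hcase.1 (hZ0u X ⟨hX, hvX⟩ ▸ rfl)
          · exact hcase.2 (hZ0u Y ⟨hY, hvY⟩ ▸ rfl)
        · exact hZ0u W ⟨Finset.mem_of_mem_erase (Finset.mem_of_mem_erase hW'), hvW⟩
  · have hYe : Y ∈ P.erase X := Finset.mem_erase.mpr ⟨fun h => hne h.symm, hY⟩
    have h2 : ((P.erase X).erase Y).card = P.card - 2 := by
      rw [Finset.card_erase_of_mem hYe, Finset.card_erase_of_mem hX]
      omega
    have hcard2 : 2 ≤ P.card := by
      have hsub : ({X, Y} : Finset (Set V)) ⊆ P := by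
        intro Z hZ
        rcases Finset.mem_insert.mp hZ with rfl | hZ'
        · exact hX
        · exact Finset.mem_singleton.mp hZ' ▸ hY
      have := Finset.card_le_card hsub
      rwa [Finset.card_pair hne] at this
    have := Finset.card_insert_le (X ∪ Y) ((P.erase X).erase Y)
    omega

open Classical in
noncomputable def colOf (G : SimpleGraph V) (Z : Set V) : V → Bool :=
  if h : ∃ f : V → Bool, ∀ u w, u ∈ Z → w ∈ Z → G.Adj u w → f u ≠ f w then h.choose
  else fun _ => true

lemma colOf_spec {G : SimpleGraph V} {Z : Set V}
    (h : ∃ f : V → Bool, ∀ u w, u ∈ Z → w ∈ Z → G.Adj u w → f u ≠ f w) :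
    ∀ u w, u ∈ Z → w ∈ Z → G.Adj u w → colOf G Z u ≠ colOf G Z w := by
  classical
  rw [colOf]
  rw [dif_pos h]
  exact h.choose_spec

noncomputable def partOf {G : SimpleGraph V} {P : Finset (Set V)} (hP : GoodP G P) (v : V) :
    Set V := (hP.2 v).choose

lemma partOf_mem {G : SimpleGraph V} {P : Finset (Set V)} (hP : GoodP G P) (v : V) :
    partOf hP v ∈ P := (hP.2 v).choose_spec.1.1

lemma mem_partOf {G : SimpleGraph V} {P : Finset (Set V)} (hP : GoodP G P) (v : V) :
    v ∈ partOf hP v := (hP.2 v).choose_spec.1.2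

lemma partOf_eq {G : SimpleGraph V} {P : Finset (Set V)} (hP : GoodP G P) {Z : Set V} {v : V}
    (hZ : Z ∈ P) (hv : v ∈ Z) : Z = partOf hP v := (hP.2 v).choose_spec.2 Z ⟨hZ, hv⟩

noncomputable def kap {G : SimpleGraph V} {P : Finset (Set V)} (hP : GoodP G P) : V → Bool :=
  fun v => colOf G (partOf hP v) v

lemma kap_proper {G : SimpleGraph V} {P : Finset (Set V)} {hP : GoodP G P} {Z : Set V}
    (hZ : Z ∈ P) {u w : V} (hu : u ∈ Z) (hw : w ∈ Z) (ha : G.Adj u w) :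
    kap hP u ≠ kap hP w := by
  have h1 : partOf hP u = Z := (partOf_eq hP hZ hu).symm
  have h2 : partOf hP w = Z := (partOf_eq hP hZ hw).symm
  show colOf G (partOf hP u) u ≠ colOf G (partOf hP w) w
  rw [h1, h2]
  exact colOf_spec (hP.1 Z hZ).2.2 u w hu hw ha

end Stmt4Aux

open Stmt4Aux SimpleGraph in
theorem stmt4 {V : Type*} [Fintype V] (G : SimpleGraph V) (t : ℕ)
    (hG : ¬ HasOddKMinor G t) :
    ∃ (n : ℕ) (X : Fin n → Set V) (H : SimpleGraph (Fin n)),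
      (∀ v : V, ∃! i, v ∈ X i) ∧
      (∀ i, (G.induce (X i)).Colorable 2) ∧
      (∀ i j, H.Adj i j ↔ i ≠ j ∧ ∃ u ∈ X i, ∃ v ∈ X j, G.Adj u v) ∧
      ¬ HasKMinor H t := by
  classical
  rcases Nat.eq_zero_or_pos t with rfl | ht
  · refine absurd ⟨Fin.elim0, Fin.elim0, fun _ => true, fun i => i.elim0, ?_,
      fun i => i.elim0, fun i => i.elim0, fun i => i.elim0⟩ hG
    intro i
    exact i.elim0
  -- minimal good partition
  obtain ⟨P0, hP0⟩ := goodP_singletons G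
  have hex : ∃ k, ∃ P : Finset (Set V), GoodP G P ∧ P.card = k := ⟨P0.card, P0, hP0, rfl⟩
  obtain ⟨P, hP, hPcard⟩ := Nat.find_spec hex
  have hmin : ∀ Q : Finset (Set V), GoodP G Q → P.card ≤ Q.card := by
    intro Q hQ
    rw [hPcard]
    exact Nat.find_le ⟨Q, hQ, rfl⟩
  let e0 : ↥P ≃ Fin P.card := Fintype.equivFinOfCardEq (Fintype.card_coe P)
  let X : Fin P.card → Set V := fun i => ↑(e0.symm i)
  have hXmem : ∀ i, X i ∈ P := fun i => (e0.symm i).2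
  have hXinj : Function.Injective X := by
    intro i j h
    exact e0.symm.injective (Subtype.coe_injective h)
  let H : SimpleGraph (Fin P.card) :=
    { Adj := fun i j => i ≠ j ∧ ∃ u ∈ X i, ∃ v ∈ X j, G.Adj u v,
      symm := by
        refine ⟨?_⟩
        rintro i j ⟨hne, u, hu, v, hv, ha⟩
        exact ⟨hne.symm, v, hv, u, hu, ha.symm⟩,
      loopless := ⟨fun i h => h.1 rfl⟩ }
  refine ⟨P.card, X, H, ?_, ?_, fun i j => Iff.rfl, ?_⟩
  · -- unique membership
    intro v
    refine ⟨e0 ⟨partOf hP v, partOf_mem hP v⟩, ?_, ?_⟩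
    · show v ∈ X (e0 ⟨partOf hP v, partOf_mem hP v⟩)
      have h1 : X (e0 ⟨partOf hP v, partOf_mem hP v⟩) = partOf hP v := by
        show ((e0.symm (e0 ⟨partOf hP v, partOf_mem hP v⟩) : ↥P) : Set V) = partOf hP v
        rw [Equiv.symm_apply_apply]
      rw [h1]
      exact mem_partOf hP v
    · intro j hj
      have hXj : X j = partOf hP v := partOf_eq hP (hXmem j) hj
      have h2 : e0.symm j = ⟨partOf hP v, partOf_mem hP v⟩ := Subtype.ext hXj
      calc j = e0 (e0.symm j) := (Equiv.apply_symm_apply _ _).symm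
        _ = e0 ⟨partOf hP v, partOf_mem hP v⟩ := by rw [h2]
  · -- colorability
    intro i
    obtain ⟨f, hf⟩ := (hP.1 (X i) (hXmem i)).2.2
    have C : (G.induce (X i)).Coloring Bool :=
      SimpleGraph.Coloring.mk (fun a => f ↑a) (by
        intro a b hab
        exact hf ↑a ↑b a.2 b.2 hab)
    simpa using C.colorable
  · -- no K_t minor in the quotient
    rintro ⟨S, hStree, hSdisj, hSconn⟩
    have hboth : ∀ p q : Fin P.card, p ≠ q → (∃ u ∈ X p, ∃ v ∈ X q, G.Adj u v) →
        ((∃ u ∈ X p, ∃ v ∈ X q, G.Adj u v ∧ kap hP u = kap hP v) ∧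
         (∃ u ∈ X p, ∃ v ∈ X q, G.Adj u v ∧ kap hP u ≠ kap hP v)) := by
      intro p q hpq hcross
      have hXne : X p ≠ X q := fun h => hpq (hXinj h)
      constructor
      · by_contra hno
        have hall : ∀ u v, u ∈ X p → v ∈ X q → G.Adj u v → kap hP u ≠ kap hP v := by
          intro u v hu hv ha heq
          exact hno ⟨u, hu, v, hv, ha, heq⟩
        obtain ⟨Q, hQ, hQc⟩ := hP.merge (hXmem p) (hXmem q) hXne hcross (kap hP)
          (fun u v hu hv ha => kap_proper (hXmem p) hu hv ha)
          (fun u v hu hv ha => kap_proper (hXmem q) hu hv ha) hall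
        have := hmin Q hQ
        omega
      · by_contra hno
        have hall : ∀ u v, u ∈ X p → v ∈ X q → G.Adj u v → kap hP u = kap hP v := by
          intro u v hu hv ha
          by_contra hne2
          exact hno ⟨u, hu, v, hv, ha, hne2⟩
        set f : V → Bool := fun v => if v ∈ X q then !(kap hP v) else kap hP v with hfdef
        have hfq : ∀ v ∈ X q, f v = !(kap hP v) := fun v hv => if_pos hv
        have hfp : ∀ v, v ∉ X q → f v = kap hP v := fun v hv => if_neg hv
        have hnotq : ∀ v ∈ X p, v ∉ X q :=
          fun v hv hv' => hP.parts_disjoint (hXmem p) (hXmem q) hXne hv hv'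
        have h1 : ∀ u v, u ∈ X p → v ∈ X p → G.Adj u v → f u ≠ f v := by
          intro u v hu hv ha
          rw [hfp u (hnotq u hu), hfp v (hnotq v hv)]
          exact kap_proper (hXmem p) hu hv ha
        have h2 : ∀ u v, u ∈ X q → v ∈ X q → G.Adj u v → f u ≠ f v := by
          intro u v hu hv ha
          rw [hfq u hu, hfq v hv]
          simpa using kap_proper (hXmem q) hu hv ha
        have h3 : ∀ u v, u ∈ X p → v ∈ X q → G.Adj u v → f u ≠ f v := by
          intro u v hu hv ha
          rw [hfp u (hnotq u hu), hfq v hv, hall u v hu hv ha]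
          cases kap hP v <;> simp
        obtain ⟨Q, hQ, hQc⟩ := hP.merge (hXmem p) (hXmem q) hXne hcross f h1 h2 h3
        have := hmin Q hQ
        omega
    -- blown-up vertex sets
    let W : Fin t → Set V := fun i => {v | ∃ p ∈ (S i).verts, v ∈ X p}
    have hXsubW : ∀ i (p : Fin P.card), p ∈ (S i).verts → X p ⊆ W i :=
      fun i p hp v hv => ⟨p, hp, hv⟩
    have hXpne : ∀ p, (X p).Nonempty := fun p => (hP.1 _ (hXmem p)).1
    have hWne : ∀ i, (W i).Nonempty := by
      intro i
      obtain ⟨p⟩ := (hStree i).isConnected.nonempty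
      obtain ⟨v, hv⟩ := hXpne ↑p
      exact ⟨v, ↑p, p.2, hv⟩
    have hWdisj : ∀ i j, i ≠ j → ∀ v, v ∈ W i → v ∈ W j → False := by
      rintro i j hij v ⟨p, hp, hvp⟩ ⟨q, hq, hvq⟩
      by_cases hpq : p = q
      · subst hpq
        exact Set.disjoint_left.mp (hSdisj hij) hp hq
      · exact hP.parts_disjoint (hXmem p) (hXmem q) (fun h => hpq (hXinj h)) hvp hvq
    let B : Fin t → SimpleGraph V := fun i =>
      { Adj := fun a b => a ∈ W i ∧ b ∈ W i ∧ G.Adj a b ∧ kap hP a ≠ kap hP b,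
        symm := by
          refine ⟨?_⟩
          rintro a b ⟨hh1, hh2, hh3, hh4⟩
          exact ⟨hh2, hh1, hh3.symm, Ne.symm hh4⟩,
        loopless := ⟨fun a h => G.irrefl h.2.2.1⟩ }
    have hBW : ∀ i a b, (B i).Adj a b → a ∈ W i ∧ b ∈ W i := fun i a b h => ⟨h.1, h.2.1⟩
    have hA : ∀ i (p : Fin P.card), p ∈ (S i).verts →
        ∀ u v, u ∈ X p → v ∈ X p → (B i).Reachable u v := by
      intro i p hp u v hu hv
      refine rtg_reach (r := Rel G (X p)) ?_ ((hP.1 (X p) (hXmem p)).2.1 u hu v hv)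
      rintro a b ⟨ha, hb, hab⟩
      exact ⟨hXsubW i p hp ha, hXsubW i p hp hb, hab, kap_proper (hXmem p) ha hb hab⟩
    have hcrossB : ∀ i (p q : ↥(S i).verts), (S i).coe.Adj p q →
        ∃ u ∈ X ↑p, ∃ v ∈ X ↑q, (B i).Adj u v := by
      intro i p q hpq
      have hH : H.Adj ↑p ↑q := (S i).adj_sub hpq
      have hH' : (↑p : Fin P.card) ≠ ↑q ∧ ∃ u ∈ X ↑p, ∃ v ∈ X ↑q, G.Adj u v := hH
      obtain ⟨u, hu, v, hv, huv, hne2⟩ := (hboth ↑p ↑q hH'.1 hH'.2).2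
      exact ⟨u, hu, v, hv, hXsubW i ↑p p.2 hu, hXsubW i ↑q q.2 hv, huv, hne2⟩
    have hreach : ∀ i, ∀ u ∈ W i, ∀ v ∈ W i, (B i).Reachable u v := by
      intro i u hu v hv
      obtain ⟨p₀⟩ := (hStree i).isConnected.nonempty
      obtain ⟨y₀, hy₀⟩ := hXpne ↑p₀
      let Qp : ↥(S i).verts → Prop := fun p => ∀ x, x ∈ X ↑p → (B i).Reachable x y₀
      have hbase : Qp p₀ := fun x hx => hA i ↑p₀ p₀.2 x y₀ hx hy₀
      have hstep : ∀ (p q : ↥(S i).verts), (S i).coe.Adj p q → Qp q → Qp p := by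
        intro p q hpq hq x hx
        obtain ⟨a, ha, b, hb, hab⟩ := hcrossB i p q hpq
        exact ((hA i ↑p p.2 x a hx ha).trans hab.reachable).trans (hq b hb)
      have hwalk : ∀ (p q : ↥(S i).verts), (S i).coe.Walk p q → Qp q → Qp p := by
        intro p q w
        induction w with
        | nil => exact id
        | cons h _ ih => exact fun hq => hstep _ _ h (ih hq)
      have hall : ∀ p : ↥(S i).verts, Qp p := by
        intro p
        obtain ⟨w⟩ := (hStree i).isConnected.preconnected p p₀
        exact hwalk _ _ w hbase
      obtain ⟨p, hp, hup⟩ := hu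
      obtain ⟨q, hq, hvq⟩ := hv
      exact (hall ⟨p, hp⟩ u hup).trans ((hall ⟨q, hq⟩ v hvq).symm)
    have hTex : ∀ i, ∃ T : SimpleGraph ↥(W i), T ≤ (B i).induce (W i) ∧ T.IsTree := by
      intro i
      have hconnΓ : ((B i).induce (W i)).Connected := by
        haveI : Nonempty ↥(W i) := (hWne i).to_subtype
        refine ⟨fun a b => ?_⟩
        obtain ⟨wlk⟩ := hreach i ↑a a.2 ↑b b.2
        exact reach_induce (hBW i) wlk a.2 b.2
      exact exists_spanning_tree _ hconnΓ
    choose Tr hTrle hTrtree using hTex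
    let T : Fin t → G.Subgraph := fun i =>
      { verts := W i,
        Adj := fun a b => ∃ (ha : a ∈ W i) (hb : b ∈ W i), (Tr i).Adj ⟨a, ha⟩ ⟨b, hb⟩,
        adj_sub := by
          rintro a b ⟨ha, hb, h⟩
          exact (hTrle i h : ((B i).induce (W i)).Adj ⟨a, ha⟩ ⟨b, hb⟩).2.2.1,
        edge_vert := by
          rintro a b ⟨ha, hb, h⟩
          exact ha,
        symm := by
          refine ⟨?_⟩
          rintro a b ⟨ha, hb, h⟩
          exact ⟨hb, ha, h.symm⟩ }
    have hTcoe : ∀ i, (T i).coe = Tr i := by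
      intro i
      ext a b
      constructor
      · rintro ⟨ha, hb, h⟩
        exact h
      · intro h
        exact ⟨a.2, b.2, h⟩
    have hmono : ∀ i j : Fin t, i ≠ j → ∃ pr : V × V,
        pr.1 ∈ W i ∧ pr.2 ∈ W j ∧ G.Adj pr.1 pr.2 ∧ kap hP pr.1 = kap hP pr.2 := by
      intro i j hij
      obtain ⟨p, hp, q, hq, hpq⟩ := hSconn i j hij
      have hH' : p ≠ q ∧ ∃ u ∈ X p, ∃ v ∈ X q, G.Adj u v := hpq
      obtain ⟨u, hu, v, hv, huv, heq⟩ := (hboth p q hH'.1 hH'.2).1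
      exact ⟨(u, v), hXsubW i p hp hu, hXsubW j q hq hv, huv, heq⟩
    obtain ⟨vstar, hvstar⟩ := hWne ⟨0, ht⟩
    let ec : Fin t → Fin t → V × V :=
      fun i j => if h : i ≠ j then (hmono i j h).choose else (vstar, vstar)
    refine hG ⟨T, ec, kap hP, ?_, ?_, ?_, ?_, ?_⟩
    · intro i
      exact (hTcoe i) ▸ hTrtree i
    · intro i j hij
      exact Set.disjoint_left.mpr fun {a} hv hv' => hWdisj i j hij a hv hv'
    · intro i j hij
      have hsp := (hmono i j hij).choose_spec
      have heq : ec i j = (hmono i j hij).choose := dif_pos hij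
      rw [heq]
      exact ⟨hsp.1, hsp.2.1, hsp.2.2.1⟩
    · intro i u v huv
      obtain ⟨ha, hb, h⟩ := huv
      exact (hTrle i h : ((B i).induce (W i)).Adj ⟨u, ha⟩ ⟨v, hb⟩).2.2.2
    · intro i j hij
      have hsp := (hmono i j hij).choose_spec
      have heq : ec i j = (hmono i j hij).choose := dif_pos hij
      rw [heq]
      exact hsp.2.2.2
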